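/- Fix n ≥ k ≥ 1. For every H ⊆ {0,...,n} with |h - h'| ≥ k for all distinct h,h' ∈ H, we have Σ_{h∈H} C(n,h) ≤ Σ_{i ∈ [0,n], i ≡ ⌊n/2⌋ (mod k)} C(n,i). -/

import Mathlib

open Finset


-- unimodality
lemma chooseMonoUp (n : ℕ) : ∀ b, b ≤ n / 2 → ∀ a, a ≤ b → n.choose a ≤ n.choose b := by
  intro b
  induction b with
  | zero => intro _ a ha; simp [Nat.le_zero.mp ha]
  | succ b ih =>
    intro hb a ha
    rcases Nat.eq_or_lt_of_le ha with rfl | h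
    · exact le_rfl
    · exact (ih (by omega) a (by omega)).trans
        (Nat.choose_le_succ_of_lt_half_left (by omega))

lemma chooseStepDown (n j : ℕ) (hj : n / 2 ≤ j) : n.choose (j + 1) ≤ n.choose j := by
  by_cases hjn : n ≤ j
  · rw [Nat.choose_eq_zero_of_lt (by omega)]; exact Nat.zero_le _
  · push_neg at hjn
    have h1 : n.choose (j + 1) = n.choose (n - (j+1)) := (Nat.choose_symm (by omega)).symm
    rw [h1]
    by_cases hc : j ≤ n / 2
    · have hj2 : j = n / 2 := le_antisymm hc hj
      exact chooseMonoUp n j (le_of_eq hj2) _ (by omega)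
    · rw [(Nat.choose_symm (by omega) : n.choose (n - j) = n.choose j).symm]
      exact chooseMonoUp n (n - j) (by omega) _ (by omega)


def Phi (k n : ℕ) (c : ℤ) : ℕ :=
  ∑ i ∈ Finset.range (n+1), if (2*(k:ℤ)) ∣ (2*(i:ℤ) - c) then n.choose i else 0

lemma Phi_congr (k n : ℕ) {c c' : ℤ} (h : (2*(k:ℤ)) ∣ (c - c')) : Phi k n c = Phi k n c' := by
  unfold Phi
  refine Finset.sum_congr rfl fun i _ => ?_
  have : (2*(k:ℤ)) ∣ (2*(i:ℤ) - c) ↔ (2*(k:ℤ)) ∣ (2*(i:ℤ) - c') := by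
    constructor
    · intro hd
      have h2 := dvd_add hd h
      have h3 : (2*(i:ℤ) - c) + (c - c') = 2*(i:ℤ) - c' := by ring
      rwa [h3] at h2
    · intro hd
      have h2 := dvd_sub hd h
      have h3 : (2*(i:ℤ) - c') - (c - c') = 2*(i:ℤ) - c := by ring
      rwa [h3] at h2
  rw [if_congr this rfl rfl]

lemma Phi_symm (k n : ℕ) (c : ℤ) : Phi k n (2*(n:ℤ) - c) = Phi k n c := by
  unfold Phi
  rw [← Finset.sum_range_reflect]
  refine Finset.sum_congr rfl fun i hi => ?_
  simp only [Finset.mem_range] at hi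
  have hin : i ≤ n := by omega
  have h1 : n + 1 - 1 - i = n - i := by omega
  rw [h1]
  have h2 : ((n - i : ℕ) : ℤ) = (n : ℤ) - i := by push_cast [hin]; ring
  have h3 : n.choose (n - i) = n.choose i := Nat.choose_symm hin
  rw [h2, h3]
  have : (2*(k:ℤ)) ∣ (2*((n:ℤ) - i) - (2*(n:ℤ) - c)) ↔ (2*(k:ℤ)) ∣ (2*(i:ℤ) - c) := by
    rw [show (2*((n:ℤ) - i) - (2*(n:ℤ) - c)) = -(2*(i:ℤ) - c) by ring, dvd_neg]
  rw [if_congr this rfl rfl]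

lemma Phi_pascal (k n : ℕ) (c : ℤ) : Phi k (n+1) c = Phi k n c + Phi k n (c - 2) := by
  unfold Phi
  rw [Finset.sum_range_succ' (fun i => if (2*(k:ℤ)) ∣ (2*(i:ℤ) - c) then (n+1).choose i else 0) (n+1)]
  have hsplit : ∀ i : ℕ, (if (2*(k:ℤ)) ∣ (2*((i:ℕ)+1:ℕ) - c) then (n+1).choose (i+1) else 0)
      = (if (2*(k:ℤ)) ∣ (2*((i:ℤ)+1) - c) then n.choose (i+1) else 0)
        + (if (2*(k:ℤ)) ∣ (2*(i:ℤ) - (c-2)) then n.choose i else 0) := by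
    intro i
    have hcond : (2*(k:ℤ)) ∣ (2*((i:ℕ)+1:ℕ) - c) ↔ (2*(k:ℤ)) ∣ (2*(i:ℤ) - (c-2)) := by
      have he : (2*((i:ℕ)+1:ℕ) - c : ℤ) = 2*(i:ℤ) - (c-2) := by push_cast; ring
      rw [he]
    have hcond2 : (2*(k:ℤ)) ∣ (2*((i:ℕ)+1:ℕ) - c) ↔ (2*(k:ℤ)) ∣ (2*((i:ℤ)+1) - c) := by
      have he : (2*((i:ℕ)+1:ℕ) - c : ℤ) = 2*((i:ℤ)+1) - c := by push_cast; ring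
      rw [he]
    by_cases h : (2*(k:ℤ)) ∣ (2*((i:ℕ)+1:ℕ) - c)
    · rw [if_pos h, if_pos (hcond2.mp h), if_pos (hcond.mp h), Nat.choose_succ_succ]; ring
    · rw [if_neg h, if_neg (fun hc => h (hcond2.mpr hc)), if_neg (fun hc => h (hcond.mpr hc))]
  calc (∑ i ∈ Finset.range (n+1),
          if (2*(k:ℤ)) ∣ (2*((i:ℕ)+1:ℕ) - c) then (n+1).choose (i+1) else 0)
        + (if (2*(k:ℤ)) ∣ (2*((0:ℕ):ℤ) - c) then (n+1).choose 0 else 0)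
      = (∑ i ∈ Finset.range (n+1),
          ((if (2*(k:ℤ)) ∣ (2*((i:ℤ)+1) - c) then n.choose (i+1) else 0)
            + (if (2*(k:ℤ)) ∣ (2*(i:ℤ) - (c-2)) then n.choose i else 0)))
        + (if (2*(k:ℤ)) ∣ (2*((0:ℕ):ℤ) - c) then (n+1).choose 0 else 0) := by
        rw [Finset.sum_congr rfl fun i _ => hsplit i]
    _ = Phi k n c + Phi k n (c-2) := by
        rw [Finset.sum_add_distrib]
        unfold Phi
        have e1 : (∑ i ∈ Finset.range (n+1),
            if (2*(k:ℤ)) ∣ (2*((i:ℤ)+1) - c) then n.choose (i+1) else 0)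
            + (if (2*(k:ℤ)) ∣ (2*((0:ℕ):ℤ) - c) then (n+1).choose 0 else 0)
            = ∑ i ∈ Finset.range (n+2), if (2*(k:ℤ)) ∣ (2*(i:ℤ) - c) then n.choose i else 0 := by
          rw [Finset.sum_range_succ' (fun i => if (2*(k:ℤ)) ∣ (2*(i:ℤ) - c) then n.choose i else 0) (n+1)]
          have hA : (∑ i ∈ Finset.range (n+1),
              if (2*(k:ℤ)) ∣ (2*((i:ℤ)+1) - c) then n.choose (i+1) else 0)
              = ∑ i ∈ Finset.range (n+1),
                if (2*(k:ℤ)) ∣ (2*(((i:ℕ)+1:ℕ):ℤ) - c) then n.choose (i+1) else 0 := by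
            refine Finset.sum_congr rfl fun i _ => ?_
            have he : (2*((i:ℤ)+1) - c) = 2*(((i:ℕ)+1:ℕ):ℤ) - c := by push_cast; ring
            rw [he]
          have hB : (if (2*(k:ℤ)) ∣ (2*((0:ℕ):ℤ) - c) then (n+1).choose 0 else 0)
              = (if (2*(k:ℤ)) ∣ (2*((0:ℕ):ℤ) - c) then n.choose 0 else 0) := by simp
          rw [hA, hB]
        have e2 : (∑ i ∈ Finset.range (n+2), if (2*(k:ℤ)) ∣ (2*(i:ℤ) - c) then n.choose i else 0)
            = ∑ i ∈ Finset.range (n+1), if (2*(k:ℤ)) ∣ (2*(i:ℤ) - c) then n.choose i else 0 := by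
          rw [Finset.sum_range_succ]
          simp [Nat.choose_eq_zero_of_lt (show n < n + 1 by omega)]
        omega

def Psi (k n : ℕ) (t : ℤ) : ℕ := Phi k n ((n:ℤ) + t)

lemma Psi_congr (k n : ℕ) {t t' : ℤ} (h : (2*(k:ℤ)) ∣ (t - t')) : Psi k n t = Psi k n t' :=
  Phi_congr k n (by convert h using 1; ring)

lemma Psi_neg (k n : ℕ) (t : ℤ) : Psi k n (-t) = Psi k n t := by
  unfold Psi
  rw [show ((n:ℤ) + -t) = 2*(n:ℤ) - ((n:ℤ) + t) by ring, Phi_symm]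

lemma Psi_pascal (k n : ℕ) (t : ℤ) : Psi k (n+1) t = Psi k n (t+1) + Psi k n (t-1) := by
  unfold Psi
  rw [show (((n:ℕ)+1 : ℕ) : ℤ) + t = (n:ℤ) + (t+1) by push_cast; ring, Phi_pascal]
  congr 2
  ring

lemma Psi_step (k : ℕ) (hk : 1 ≤ k) : ∀ n : ℕ, ∀ t : ℤ, 0 ≤ t → t + 2 ≤ (k:ℤ) →
    Psi k n (t+2) ≤ Psi k n t := by
  intro n
  induction n with
  | zero =>
    intro t ht htk
    have : Psi k 0 (t+2) = 0 := by
      unfold Psi Phi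
      rw [Finset.sum_range_one]
      rw [if_neg]
      intro hd
      have h1 : (2*((0:ℕ):ℤ) - (((0:ℕ):ℤ) + (t+2))) = -(t+2) := by push_cast; ring
      rw [h1, dvd_neg] at hd
      have := Int.le_of_dvd (by omega) hd
      omega
    omega
  | succ n ih =>
    intro t ht htk
    rw [Psi_pascal, Psi_pascal]
    have key : Psi k n (t+3) ≤ Psi k n (t-1) := by
      have hstep2 : Psi k n (t+1) ≤ Psi k n (t-1) := by
        rcases eq_or_lt_of_le ht with h0 | h1
        · -- t = 0
          have : Psi k n (t-1) = Psi k n (t+1) := by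
            rw [show t - 1 = -(t+1) by omega, Psi_neg]
          omega
        · have := ih (t-1) (by omega) (by omega)
          have he : t - 1 + 2 = t + 1 := by ring
          rwa [he] at this
      by_cases hc : t + 3 ≤ (k:ℤ)
      · have hstep1 : Psi k n (t+3) ≤ Psi k n (t+1) := by
          have := ih (t+1) (by omega) (by omega)
          have he : t + 1 + 2 = t + 3 := by ring
          rwa [he] at this
        omega
      · -- t + 2 = k
        have htk2 : t + 2 = (k:ℤ) := by omega
        have h1 : Psi k n (t+3) = Psi k n (t+1) := by
          have e1 : Psi k n (t+3) = Psi k n (t+3 - 2*k) := by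
            apply Psi_congr
            exact ⟨1, by ring⟩
          rw [e1, show t+3 - 2*(k:ℤ) = -(t+1) by omega, Psi_neg]
        omega
    have h2 : Psi k (0) 0 = Psi k 0 0 := rfl
    have e1 : t + 2 + 1 = t + 3 := by ring
    have e2 : t + 2 - 1 = t + 1 := by ring
    rw [e1, e2]
    omega

lemma Psi_mono (k : ℕ) (hk : 1 ≤ k) (n : ℕ) : ∀ j : ℕ, ∀ t : ℤ, 0 ≤ t → t + 2*j ≤ (k:ℤ) →
    Psi k n (t + 2*j) ≤ Psi k n t := by
  intro j
  induction j with
  | zero => intro t _ _; simp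
  | succ j ih =>
    intro t ht htk
    have h1 : Psi k n (t + 2*(j+1:ℕ)) = Psi k n ((t+2) + 2*j) := by
      congr 1; push_cast; ring
    have h2 := ih (t+2) (by omega) (by push_cast at htk ⊢; omega)
    have h3 := Psi_step k hk n t ht (by push_cast at htk; omega)
    rw [h1]
    omega

-- bridge: filtered sum equals Phi
lemma filter_sum_eq_Phi (k n r : ℕ) (hk : 1 ≤ k) :
    ∑ i ∈ (Finset.range (n+1)).filter (fun i => i % k = r % k), n.choose i
      = Phi k n (2*(r:ℤ)) := by
  unfold Phi
  rw [Finset.sum_filter]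
  refine Finset.sum_congr rfl fun i _ => ?_
  have : (i % k = r % k) ↔ ((2*(k:ℤ)) ∣ (2*(i:ℤ) - 2*(r:ℤ))) := by
    rw [show (2*(i:ℤ) - 2*(r:ℤ)) = 2*((i:ℤ) - (r:ℤ)) by ring]
    rw [mul_dvd_mul_iff_left (two_ne_zero)]
    have h1 : (i % k = r % k) ↔ Nat.ModEq k r i := by
      unfold Nat.ModEq; omega
    rw [h1, Nat.modEq_iff_dvd]
  rw [if_congr this rfl rfl]

lemma classC (k n r : ℕ) (hk : 1 ≤ k) :
    ∑ i ∈ (Finset.range (n+1)).filter (fun i => i % k = r % k), n.choose i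
      ≤ ∑ i ∈ (Finset.range (n+1)).filter (fun i => i % k = (n/2) % k), n.choose i := by
  rw [filter_sum_eq_Phi k n r hk, filter_sum_eq_Phi k n (n/2) hk]
  -- target class: Phi (2*(n/2)) = Psi (n % 2)
  have hm : Phi k n (2*((n/2 : ℕ):ℤ)) = Psi k n ((n % 2 : ℕ) : ℤ) := by
    have h1 : Phi k n (2*((n/2 : ℕ):ℤ)) = Psi k n (-((n % 2 : ℕ) : ℤ)) := by
      unfold Psi
      congr 1
      have := Nat.div_add_mod n 2
      push_cast
      omega
    rw [h1, Psi_neg]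
  have hr : Phi k n (2*(r:ℤ)) = Psi k n (2*(r:ℤ) - n) := by
    unfold Psi; congr 1; ring
  rw [hm, hr]
  -- reduce to distance d ∈ [0,k] with right parity
  have tail : ∀ d : ℤ, 0 ≤ d → d ≤ (k:ℤ) → (2:ℤ) ∣ (d - (n % 2 : ℕ)) →
      Psi k n d ≤ Psi k n ((n % 2 : ℕ) : ℤ) := by
    intro d hd0 hdk hpar
    have hn2 : ((n % 2 : ℕ) : ℤ) ≤ d := by
      have : ((n % 2 : ℕ) : ℤ) = 0 ∨ ((n % 2 : ℕ) : ℤ) = 1 := by omega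
      omega
    obtain ⟨j, hj⟩ : ∃ j : ℕ, d = ((n % 2 : ℕ) : ℤ) + 2*j := by
      refine ⟨((d - (n % 2 : ℕ))/2).toNat, ?_⟩
      omega
    rw [hj]
    exact Psi_mono k hk n j _ (by positivity) (by omega)
  set t : ℤ := 2*(r:ℤ) - n with htdef
  set a : ℤ := t % (2*(k:ℤ)) with hadef
  have hk2 : (0:ℤ) < 2*(k:ℤ) := by positivity
  have ha0 : 0 ≤ a := Int.emod_nonneg t (by omega)
  have ha2k : a < 2*(k:ℤ) := Int.emod_lt_of_pos t hk2
  have hta : Psi k n t = Psi k n a := by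
    apply Psi_congr
    exact ⟨t / (2*(k:ℤ)), by rw [hadef, Int.emod_def]; ring⟩
  have hpar_ta : (2:ℤ) ∣ (t - a) := by
    obtain ⟨c, hc⟩ : (2*(k:ℤ)) ∣ (t - a) := ⟨t / (2*(k:ℤ)), by rw [hadef, Int.emod_def]; ring⟩
    exact ⟨(k:ℤ)*c, by rw [hc]; ring⟩
  have hparn : (2:ℤ) ∣ (t + n) := ⟨r, by rw [htdef]; ring⟩
  have hmod2 : ((n % 2 : ℕ) : ℤ) = (n : ℤ) % 2 := by omega
  rw [hta]
  by_cases hak : a ≤ (k:ℤ)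
  · exact tail a ha0 hak (by omega)
  · have h1 : Psi k n a = Psi k n (2*(k:ℤ) - a) := by
      have e1 : Psi k n a = Psi k n (a - 2*(k:ℤ)) := Psi_congr k n ⟨1, by ring⟩
      rw [e1, show a - 2*(k:ℤ) = -(2*(k:ℤ) - a) by ring, Psi_neg]
    rw [h1]
    exact tail _ (by omega) (by omega) (by omega)

lemma aux_compress (n k : ℕ) (hk : 1 ≤ k) :
    ∀ μ : ℕ, ∀ H : Finset ℕ, H ⊆ Finset.range (n+1) →
    (∀ h ∈ H, ∀ h' ∈ H, h ≠ h' → (k:ℤ) ≤ |(h:ℤ) - (h':ℤ)|) →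
    (∑ h ∈ H, Nat.dist h (n/2)) ≤ μ →
    ∑ h ∈ H, n.choose h ≤
      ∑ i ∈ (Finset.range (n+1)).filter (fun i => i % k = (n/2) % k), n.choose i := by
  intro μ
  induction μ using Nat.strong_induction_on with
  | _ μ IH =>
  intro H hsub hsep hμ
  by_cases hal : ∀ a ∈ H, ∀ b ∈ H, a % k = b % k
  · rcases H.eq_empty_or_nonempty with rfl | ⟨x, hx⟩
    · simp
    · calc ∑ h ∈ H, n.choose h
          ≤ ∑ i ∈ (Finset.range (n+1)).filter (fun i => i % k = x % k), n.choose i := by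
            apply Finset.sum_le_sum_of_subset
            intro h hh
            simp only [Finset.mem_filter, Finset.mem_range]
            refine ⟨?_, hal h hh x hx⟩
            have := hsub hh
            simpa using this
        _ ≤ _ := classC k n x hk
  · push_neg at hal
    obtain ⟨a0, ha0, b0, hb0, hab0⟩ := hal
    set P := (H ×ˢ H).filter (fun p => p.1 < p.2 ∧ p.1 % k ≠ p.2 % k) with hP
    have hPne : P.Nonempty := by
      rcases lt_or_gt_of_ne (show a0 ≠ b0 from fun h => hab0 (by rw [h])) with h | h
      · exact ⟨(a0, b0), by
          simp only [hP, Finset.mem_filter, Finset.mem_product]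
          exact ⟨⟨ha0, hb0⟩, h, hab0⟩⟩
      · exact ⟨(b0, a0), by
          simp only [hP, Finset.mem_filter, Finset.mem_product]
          exact ⟨⟨hb0, ha0⟩, h, fun he => hab0 he.symm⟩⟩
    obtain ⟨p, hpP, hpmin⟩ := Finset.exists_min_image P (fun p => p.2 - p.1) hPne
    obtain ⟨a, b⟩ := p
    simp only [hP, Finset.mem_filter, Finset.mem_product] at hpP
    obtain ⟨⟨ha, hb⟩, hab, hmod⟩ := hpP
    have hbetween : ∀ c ∈ H, a < c → c < b → False := by
      intro c hc h1 h2
      by_cases hca : c % k = a % k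
      · have hcb : (c, b) ∈ P := by
          simp only [hP, Finset.mem_filter, Finset.mem_product]
          exact ⟨⟨hc, hb⟩, h2, fun he => hmod (hca ▸ he)⟩
        have := hpmin _ hcb
        simp only at this
        omega
      · have hac : (a, c) ∈ P := by
          simp only [hP, Finset.mem_filter, Finset.mem_product]
          exact ⟨⟨ha, hc⟩, h1, fun he => hca he.symm⟩
        have := hpmin _ hac
        simp only at this
        omega
    have hgapZ := hsep a ha b hb (by omega)
    have habs : |(a:ℤ) - (b:ℤ)| = (b:ℤ) - a := by
      rw [abs_sub_comm]
      exact abs_of_nonneg (by omega)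
    have hgap1 : k ≤ b - a := by omega
    have hgap : k + 1 ≤ b - a := by
      rcases Nat.eq_or_lt_of_le hgap1 with he | h
      · exfalso
        have : b = a + k := by omega
        apply hmod
        rw [this, Nat.add_mod_right]
      · omega
    set L := H.filter (fun h => h ≤ a) with hL
    set R := H.filter (fun h => ¬ h ≤ a) with hR
    have hLR : L ∪ R = H := Finset.filter_union_filter_not_eq _ H
    have hdisj : Disjoint L R := Finset.disjoint_filter_filter_not H H _
    have haL : a ∈ L := by simp [hL, ha]
    have hbRmem : b ∈ R := by simp [hR, hb]; omega
    have hLle : ∀ l ∈ L, l ≤ a := by intro l hl; simp [hL] at hl; exact hl.2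
    have hLH : ∀ l ∈ L, l ∈ H := fun l hl => (Finset.filter_subset _ _) hl
    have hRH : ∀ r ∈ R, r ∈ H := fun r hr => (Finset.filter_subset _ _) hr
    have hRge : ∀ r ∈ R, b ≤ r := by
      intro r hr
      simp only [hR, Finset.mem_filter, not_le] at hr
      by_contra hc
      push_neg at hc
      exact hbetween r hr.1 hr.2 (by omega)
    have hRn : ∀ r ∈ R, r ≤ n := by
      intro r hr
      have := hsub (hRH r hr)
      simp only [Finset.mem_range] at this
      omega
    by_cases hbm : n / 2 < b
    · -- move R left by one
      set R' := R.image (fun r => r - 1) with hR'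
      set H' := L ∪ R' with hH'
      have hb1 : 1 ≤ b := by omega
      have hR'mem : ∀ x ∈ R', ∃ r ∈ R, x = r - 1 := by
        intro x hx
        simp only [hR', Finset.mem_image] at hx
        obtain ⟨r, hr, hrx⟩ := hx
        exact ⟨r, hr, hrx.symm⟩
      have hinj : ∀ x ∈ R, ∀ y ∈ R, x - 1 = y - 1 → x = y := by
        intro x hx y hy hxy
        have := hRge x hx; have := hRge y hy
        omega
      have hdisj' : Disjoint L R' := by
        rw [Finset.disjoint_left]
        intro x hxL hxR'
        have hxa := hLle x hxL
        obtain ⟨r, hr, rfl⟩ := hR'mem x hxR'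
        have := hRge r hr
        omega
      have hsub' : H' ⊆ Finset.range (n+1) := by
        intro x hx
        rcases Finset.mem_union.mp hx with hx | hx
        · exact hsub (hLH x hx)
        · obtain ⟨r, hr, rfl⟩ := hR'mem x hx
          simp only [Finset.mem_range]
          have := hRn r hr
          omega
      have hsep' : ∀ x ∈ H', ∀ y ∈ H', x ≠ y → (k:ℤ) ≤ |(x:ℤ) - (y:ℤ)| := by
        have cross : ∀ l ∈ L, ∀ y ∈ R', (k:ℤ) ≤ |(l:ℤ) - (y:ℤ)| := by
          intro l hl y hy
          obtain ⟨r, hr, rfl⟩ := hR'mem y hy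
          have h1 := hRge r hr
          have h2 := hLle l hl
          have : (k:ℤ) ≤ ((r-1:ℕ):ℤ) - (l:ℤ) := by
            push_cast [show 1 ≤ r by omega]
            omega
          calc (k:ℤ) ≤ ((r-1:ℕ):ℤ) - (l:ℤ) := this
            _ ≤ |((r-1:ℕ):ℤ) - (l:ℤ)| := le_abs_self _
            _ = |(l:ℤ) - ((r-1:ℕ):ℤ)| := abs_sub_comm _ _
        intro x hx y hy hxy
        rcases Finset.mem_union.mp hx with hx' | hx' <;>
          rcases Finset.mem_union.mp hy with hy' | hy'
        · exact hsep x (hLH x hx') y (hLH y hy') hxy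
        · exact cross x hx' y hy'
        · rw [abs_sub_comm]; exact cross y hy' x hx'
        · obtain ⟨r, hr, rfl⟩ := hR'mem x hx'
          obtain ⟨s, hs, rfl⟩ := hR'mem y hy'
          have h1 := hRge r hr; have h2 := hRge s hs
          have hrs : r ≠ s := fun he => hxy (by rw [he])
          have := hsep r (hRH r hr) s (hRH s hs) hrs
          have e : |((r-1:ℕ):ℤ) - ((s-1:ℕ):ℤ)| = |(r:ℤ) - (s:ℤ)| := by
            congr 1
            push_cast [show 1 ≤ r by omega, show 1 ≤ s by omega]
            ring
          rw [e]
          exact this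
      have hsum' : ∑ x ∈ H', n.choose x = ∑ l ∈ L, n.choose l + ∑ r ∈ R, n.choose (r-1) := by
        rw [hH', Finset.sum_union hdisj', hR', Finset.sum_image hinj]
      have hsumle : ∑ h ∈ H, n.choose h ≤ ∑ x ∈ H', n.choose x := by
        rw [← hLR, Finset.sum_union hdisj, hsum']
        have : ∑ r ∈ R, n.choose r ≤ ∑ r ∈ R, n.choose (r-1) := by
          apply Finset.sum_le_sum
          intro r hr
          have h1 := hRge r hr
          have h2 := chooseStepDown n (r-1) (by omega)
          rwa [show r - 1 + 1 = r by omega] at h2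
        omega
      have hmeas' : ∑ x ∈ H', Nat.dist x (n/2) < ∑ h ∈ H, Nat.dist h (n/2) := by
        rw [← hLR, Finset.sum_union hdisj, hH', Finset.sum_union hdisj', hR',
          Finset.sum_image hinj]
        have : ∑ r ∈ R, Nat.dist (r-1) (n/2) < ∑ r ∈ R, Nat.dist r (n/2) := by
          apply Finset.sum_lt_sum_of_nonempty ⟨b, hbRmem⟩
          intro r hr
          have h1 := hRge r hr
          simp only [Nat.dist]
          omega
        omega
      exact hsumle.trans (IH (∑ x ∈ H', Nat.dist x (n/2)) (by omega) H' hsub' hsep' le_rfl)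
    · -- move L right by one
      push_neg at hbm
      have han : a + k + 1 ≤ n / 2 := by omega
      set L' := L.image (fun l => l + 1) with hL'
      set H' := L' ∪ R with hH'
      have hL'mem : ∀ x ∈ L', ∃ l ∈ L, x = l + 1 := by
        intro x hx
        simp only [hL', Finset.mem_image] at hx
        obtain ⟨l, hl, hlx⟩ := hx
        exact ⟨l, hl, hlx.symm⟩
      have hinj : ∀ x ∈ L, ∀ y ∈ L, x + 1 = y + 1 → x = y := by intro x _ y _ h; omega
      have hdisj' : Disjoint L' R := by
        rw [Finset.disjoint_left]
        intro x hxL' hxR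
        obtain ⟨l, hl, rfl⟩ := hL'mem x hxL'
        have := hRge _ hxR
        have := hLle l hl
        omega
      have hsub' : H' ⊆ Finset.range (n+1) := by
        intro x hx
        rcases Finset.mem_union.mp hx with hx | hx
        · obtain ⟨l, hl, rfl⟩ := hL'mem x hx
          simp only [Finset.mem_range]
          have := hLle l hl
          have hn2 : n / 2 ≤ n := Nat.div_le_self n 2
          omega
        · exact hsub (hRH x hx)
      have hsep' : ∀ x ∈ H', ∀ y ∈ H', x ≠ y → (k:ℤ) ≤ |(x:ℤ) - (y:ℤ)| := by
        have cross : ∀ x ∈ L', ∀ r ∈ R, (k:ℤ) ≤ |(x:ℤ) - (r:ℤ)| := by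
          intro x hx r hr
          obtain ⟨l, hl, rfl⟩ := hL'mem x hx
          have h1 := hRge r hr
          have h2 := hLle l hl
          have : (k:ℤ) ≤ (r:ℤ) - ((l+1:ℕ):ℤ) := by push_cast; omega
          calc (k:ℤ) ≤ (r:ℤ) - ((l+1:ℕ):ℤ) := this
            _ ≤ |(r:ℤ) - ((l+1:ℕ):ℤ)| := le_abs_self _
            _ = |((l+1:ℕ):ℤ) - (r:ℤ)| := abs_sub_comm _ _
        intro x hx y hy hxy
        rcases Finset.mem_union.mp hx with hx' | hx' <;>
          rcases Finset.mem_union.mp hy with hy' | hy'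
        · obtain ⟨l, hl, rfl⟩ := hL'mem x hx'
          obtain ⟨l', hl', rfl⟩ := hL'mem y hy'
          have hll : l ≠ l' := fun he => hxy (by rw [he])
          have := hsep l (hLH l hl) l' (hLH l' hl') hll
          have e : |((l+1:ℕ):ℤ) - ((l'+1:ℕ):ℤ)| = |(l:ℤ) - (l':ℤ)| := by
            congr 1; push_cast; ring
          rw [e]; exact this
        · exact cross x hx' y hy'
        · rw [abs_sub_comm]; exact cross y hy' x hx'
        · exact hsep x (hRH x hx') y (hRH y hy') hxy
      have hsum' : ∑ x ∈ H', n.choose x = ∑ l ∈ L, n.choose (l+1) + ∑ r ∈ R, n.choose r := by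
        rw [hH', Finset.sum_union hdisj', hL', Finset.sum_image hinj]
      have hsumle : ∑ h ∈ H, n.choose h ≤ ∑ x ∈ H', n.choose x := by
        rw [← hLR, Finset.sum_union hdisj, hsum']
        have : ∑ l ∈ L, n.choose l ≤ ∑ l ∈ L, n.choose (l+1) := by
          apply Finset.sum_le_sum
          intro l hl
          have h2 := hLle l hl
          exact Nat.choose_le_succ_of_lt_half_left (by omega)
        omega
      have hmeas' : ∑ x ∈ H', Nat.dist x (n/2) < ∑ h ∈ H, Nat.dist h (n/2) := by
        rw [← hLR, Finset.sum_union hdisj, hH', Finset.sum_union hdisj', hL',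
          Finset.sum_image hinj]
        have : ∑ l ∈ L, Nat.dist (l+1) (n/2) < ∑ l ∈ L, Nat.dist l (n/2) := by
          apply Finset.sum_lt_sum_of_nonempty ⟨a, haL⟩
          intro l hl
          have h2 := hLle l hl
          simp only [Nat.dist]
          omega
        omega
      exact hsumle.trans (IH (∑ x ∈ H', Nat.dist x (n/2)) (by omega) H' hsub' hsep' le_rfl)

/-- For every `H ⊆ {0,…,n}` with pairwise distances `≥ k`,
`∑_{h∈H} C(n,h) ≤ ∑_{i ∈ [0,n], i ≡ ⌊n/2⌋ (mod k)} C(n,i)`. -/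
theorem residue_class_maximizes (n k : ℕ) (hk : 1 ≤ k) (hn : k ≤ n)
    (H : Finset ℕ) (hH : H ⊆ Finset.range (n + 1))
    (hdist : ∀ h ∈ H, ∀ h' ∈ H, h ≠ h' → (k : ℤ) ≤ |(h : ℤ) - (h' : ℤ)|) :
    ∑ h ∈ H, n.choose h ≤
      ∑ i ∈ (Finset.range (n + 1)).filter (fun i => i % k = (n / 2) % k),
        n.choose i :=
  aux_compress n k hk (∑ h ∈ H, Nat.dist h (n / 2)) H hH hdist le_rfl
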